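/- Let φ(t) = t + log t² and let t₀ ≤ −4. Then for every τ > 0 and all t, y, s ≤ t₀: (i) if y ≥ t then e^{−τ(φ(t) − φ(y))} ≤ e^{τφ'(t)(y−t) − τ(y−t)²/t²}; (ii) if s ≤ y ≤ t then e^{−τ(φ(t) − φ(y))} ≤ e^{−τφ'(t)(t−y) − τ(y−t)²/s²}. Here φ'(t) = 1 + 2/t. -/

import Mathlib

open Real

noncomputable section

/-- The weight function `φ(t) = t + log t²` in the logarithmic variable `t = log r`. -/
noncomputable def phiLog (t : ℝ) : ℝ := t + Real.log (t ^ 2)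

/-- The derivative `φ'(t) = 1 + 2/t` of the weight function. -/
noncomputable def phiLog' (t : ℝ) : ℝ := 1 + 2 / t

private lemma hasDerivA {x : ℝ} (hx : x ≠ 0) :
    HasDerivAt (fun x : ℝ => (x - 1) - (x - 1) ^ 2 / 2 - Real.log x)
      (1 - (x - 1) - x⁻¹) x := by
  have h1 : HasDerivAt (fun x : ℝ => x - 1) 1 x := (hasDerivAt_id x).sub_const 1
  have h2 := (h1.pow 2).div_const 2
  have h3 := Real.hasDerivAt_log hx
  refine ((h1.sub h2).sub h3).congr_deriv ?_
  push_cast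
  ring

private lemma lemA {u : ℝ} (hu : 0 < u) (hu1 : u ≤ 1) :
    Real.log u ≤ (u - 1) - (u - 1) ^ 2 / 2 := by
  set f : ℝ → ℝ := fun x => (x - 1) - (x - 1) ^ 2 / 2 - Real.log x with hfdef
  have hpos : ∀ x ∈ Set.Icc u 1, 0 < x := fun x hx => lt_of_lt_of_le hu hx.1
  have hanti : AntitoneOn f (Set.Icc u 1) := by
    apply antitoneOn_of_deriv_nonpos (convex_Icc u 1)
    · exact fun x hx => (hasDerivA (hpos x hx).ne').continuousAt.continuousWithinAt
    · exact fun x hx =>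
        (hasDerivA (hpos x (interior_subset hx)).ne').differentiableAt.differentiableWithinAt
    · intro x hx
      have hx0 : 0 < x := hpos x (interior_subset hx)
      rw [(hasDerivA hx0.ne').deriv]
      have h : 0 ≤ (x - 1) ^ 2 / x := div_nonneg (sq_nonneg _) hx0.le
      have e : (x - 1) ^ 2 / x = x - 2 + x⁻¹ := by field_simp; ring
      rw [e] at h
      linarith
  have h01 : f 1 ≤ f u := hanti ⟨le_refl u, hu1⟩ ⟨hu1, le_refl 1⟩ hu1
  have hf1 : f 1 = 0 := by simp [hfdef]
  rw [hf1] at h01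
  simp only [hfdef] at h01
  linarith

private lemma hasDerivB {x : ℝ} (hx : x ≠ 0) :
    HasDerivAt (fun x : ℝ => (x - 1) - (x - 1) ^ 2 / (2 * x ^ 2) - Real.log x)
      (1 - (2 * (x - 1) * (2 * x ^ 2) - (x - 1) ^ 2 * (4 * x)) / (2 * x ^ 2) ^ 2 - x⁻¹) x := by
  have h1 : HasDerivAt (fun x : ℝ => x - 1) 1 x := (hasDerivAt_id x).sub_const 1
  have hp : HasDerivAt (fun x : ℝ => (x - 1) ^ 2) (2 * (x - 1)) x := by
    have := h1.pow 2
    refine this.congr_deriv ?_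
    push_cast
    ring
  have hq : HasDerivAt (fun x : ℝ => 2 * x ^ 2) (4 * x) x := by
    have := ((hasDerivAt_id x).pow 2).const_mul (2 : ℝ)
    refine this.congr_deriv ?_
    simp only [id_eq]
    push_cast
    ring
  have hq0 : 2 * x ^ 2 ≠ 0 := by positivity
  have h3 := Real.hasDerivAt_log hx
  exact (h1.sub (hp.div hq hq0)).sub h3

private lemma lemB {u : ℝ} (hu : 1 ≤ u) :
    Real.log u ≤ (u - 1) - (u - 1) ^ 2 / (2 * u ^ 2) := by
  set f : ℝ → ℝ := fun x => (x - 1) - (x - 1) ^ 2 / (2 * x ^ 2) - Real.log x with hfdef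
  have hpos : ∀ x ∈ Set.Icc 1 u, 0 < x := fun x hx => lt_of_lt_of_le one_pos hx.1
  have hmono : MonotoneOn f (Set.Icc 1 u) := by
    apply monotoneOn_of_deriv_nonneg (convex_Icc 1 u)
    · exact fun x hx => (hasDerivB (hpos x hx).ne').continuousAt.continuousWithinAt
    · exact fun x hx =>
        (hasDerivB (hpos x (interior_subset hx)).ne').differentiableAt.differentiableWithinAt
    · intro x hx
      have hx0 : 0 < x := hpos x (interior_subset hx)
      have hx1 : 1 ≤ x := (interior_subset hx).1
      rw [(hasDerivB hx0.ne').deriv]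
      have e : 1 - (2 * (x - 1) * (2 * x ^ 2) - (x - 1) ^ 2 * (4 * x)) / (2 * x ^ 2) ^ 2 - x⁻¹
          = (x - 1) ^ 2 * (x + 1) / x ^ 3 := by
        field_simp
        ring
      rw [e]
      positivity
  have h01 : f 1 ≤ f u := hmono ⟨le_refl 1, hu⟩ ⟨hu, le_refl u⟩ hu
  have hf1 : f 1 = 0 := by simp [hfdef]
  rw [hf1] at h01
  simp only [hfdef] at h01
  linarith

/-- for `t, y, s ≤ t₀ ≤ -4` and `τ > 0`:
(i) if `y ≥ t` then `e^{-τ(φ(t) - φ(y))} ≤ e^{τφ'(t)(y-t) - τ(y-t)²/t²}`;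
(ii) if `s ≤ y ≤ t` then `e^{-τ(φ(t) - φ(y))} ≤ e^{-τφ'(t)(t-y) - τ(y-t)²/s²}`. -/
theorem statement18 (t₀ : ℝ) (ht₀ : t₀ ≤ -4) (τ : ℝ) (hτ : 0 < τ)
    (t y s : ℝ) (ht : t ≤ t₀) (hy : y ≤ t₀) (hs : s ≤ t₀) :
    (t ≤ y → Real.exp (-(τ * (phiLog t - phiLog y)))
        ≤ Real.exp (τ * phiLog' t * (y - t) - τ * (y - t) ^ 2 / t ^ 2))
    ∧ (s ≤ y → y ≤ t → Real.exp (-(τ * (phiLog t - phiLog y)))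
        ≤ Real.exp (-(τ * phiLog' t * (t - y)) - τ * (y - t) ^ 2 / s ^ 2)) := by
  have htneg : t < 0 := lt_of_le_of_lt ht (by linarith)
  have hyneg : y < 0 := lt_of_le_of_lt hy (by linarith)
  have htne : t ≠ 0 := htneg.ne
  have hyne : y ≠ 0 := hyneg.ne
  have hu : 0 < y / t := div_pos_of_neg_of_neg hyneg htneg
  constructor
  · intro hty
    rw [Real.exp_le_exp]
    have hu1 : y / t ≤ 1 := by
      have e : 1 - y / t = (t - y) / t := by field_simp
      have h : 0 ≤ (t - y) / t := div_nonneg_of_nonpos (by linarith) htneg.le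
      linarith [e ▸ h]
    have key : Real.log y - Real.log t ≤ (y - t) / t - (y - t) ^ 2 / (2 * t ^ 2) := by
      have h := lemA hu hu1
      rw [Real.log_div hyne htne] at h
      have e : (y / t - 1) - (y / t - 1) ^ 2 / 2 = (y - t) / t - (y - t) ^ 2 / (2 * t ^ 2) := by
        field_simp
      linarith [e ▸ h]
    have main : phiLog y - phiLog t ≤ phiLog' t * (y - t) - (y - t) ^ 2 / t ^ 2 := by
      simp only [phiLog, phiLog', Real.log_pow]
      push_cast
      have e1 : (1 + 2 / t) * (y - t) = (y - t) + 2 * ((y - t) / t) := by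
        field_simp
      rw [e1]
      have e2 : (y - t) ^ 2 / (2 * t ^ 2) = ((y - t) ^ 2 / t ^ 2) / 2 := by ring
      rw [e2] at key
      linarith
    calc -(τ * (phiLog t - phiLog y)) = τ * (phiLog y - phiLog t) := by ring
      _ ≤ τ * (phiLog' t * (y - t) - (y - t) ^ 2 / t ^ 2) :=
          mul_le_mul_of_nonneg_left main hτ.le
      _ = τ * phiLog' t * (y - t) - τ * (y - t) ^ 2 / t ^ 2 := by ring
  · intro hsy hyt
    rw [Real.exp_le_exp]
    have hsneg : s < 0 := lt_of_le_of_lt hs (by linarith)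
    have hu1 : 1 ≤ y / t := by
      have e : y / t - 1 = (y - t) / t := by field_simp
      have h : 0 ≤ (y - t) / t := div_nonneg_of_nonpos (by linarith) htneg.le
      linarith [e ▸ h]
    have key : Real.log y - Real.log t ≤ (y - t) / t - (y - t) ^ 2 / (2 * y ^ 2) := by
      have h := lemB hu1
      rw [Real.log_div hyne htne] at h
      have e : (y / t - 1) - (y / t - 1) ^ 2 / (2 * (y / t) ^ 2)
          = (y - t) / t - (y - t) ^ 2 / (2 * y ^ 2) := by
        field_simp
      linarith [e ▸ h]
    have hsy2 : (y - t) ^ 2 / s ^ 2 ≤ (y - t) ^ 2 / y ^ 2 := by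
      apply div_le_div_of_nonneg_left (sq_nonneg _) (by positivity)
      nlinarith
    have main : phiLog y - phiLog t ≤ phiLog' t * (y - t) - (y - t) ^ 2 / s ^ 2 := by
      simp only [phiLog, phiLog', Real.log_pow]
      push_cast
      have e1 : (1 + 2 / t) * (y - t) = (y - t) + 2 * ((y - t) / t) := by
        field_simp
      rw [e1]
      have e2 : (y - t) ^ 2 / (2 * y ^ 2) = ((y - t) ^ 2 / y ^ 2) / 2 := by ring
      rw [e2] at key
      linarith
    calc -(τ * (phiLog t - phiLog y)) = τ * (phiLog y - phiLog t) := by ring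
      _ ≤ τ * (phiLog' t * (y - t) - (y - t) ^ 2 / s ^ 2) :=
          mul_le_mul_of_nonneg_left main hτ.le
      _ = -(τ * phiLog' t * (t - y)) - τ * (y - t) ^ 2 / s ^ 2 := by ring
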